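/- Let ω be a weight on [0,1] satisfying the dyadic reverse doubling condition, and let 1 < p < ∞. Then there exist constants c, c' > 0 such that for every finite family Λ of dyadic intervals, c·(card Λ)^{1/p} ≤ (∫_0^1 (∑_{I∈Λ} ω(I)^{−2/p} χ_I(x))^{p/2} ω(x) dx)^{1/p} ≤ c'·(card Λ)^{1/p}. In particular, the norm of ∑_{I∈Λ} H_I/‖H_I‖_{p,ω} in X^p(ω) is comparable to (card Λ)^{1/p}. -/

import Mathlib

open MeasureTheory Set

noncomputable def dyadicI (n k : ℕ) : Set ℝ := Set.Ico ((k : ℝ) / 2 ^ n) (((k : ℝ) + 1) / 2 ^ n)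

def IsDyadic (I : ℕ × ℕ) : Prop := I.2 < 2 ^ I.1

noncomputable def wInt (w : ℝ → ℝ) (I : ℕ × ℕ) : ℝ := ∫ x in dyadicI I.1 I.2, w x

/-- `X^p(ω)`-norm of `∑_{I ∈ Λ} H_I / ‖H_I‖_{p,ω}`, computed via the Littlewood–Paley
square function expression. -/
noncomputable def XnormOne (w : ℝ → ℝ) (p : ℝ) (Λ : Finset (ℕ × ℕ)) : ℝ :=
  (∫ x in Set.Ico (0 : ℝ) 1,
      (∑ I ∈ Λ, Set.indicator (dyadicI I.1 I.2) (fun _ => (wInt w I) ^ (-(2 / p))) x) ^ (p / 2)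
        * w x) ^ (1 / p)

lemma dyadicI_subset_unit {n k : ℕ} (hk : k < 2 ^ n) : dyadicI n k ⊆ Set.Ico (0:ℝ) 1 := by
  intro y hy
  obtain ⟨h1, h2⟩ := hy
  refine ⟨le_trans (by positivity) h1, ?_⟩
  have hk' : (k:ℝ) + 1 ≤ (2:ℝ)^n := by exact_mod_cast Nat.succ_le_of_lt hk
  calc y < ((k:ℝ)+1)/2^n := h2
    _ ≤ 1 := by rw [div_le_one (by positivity)]; exact hk'

lemma dyadicI_subset {n m k j : ℕ} (hmn : m ≤ n) {x : ℝ}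
    (hx1 : x ∈ dyadicI n k) (hx2 : x ∈ dyadicI m j) :
    dyadicI n k ⊆ dyadicI m j := by
  obtain ⟨a1, a2⟩ := hx1
  obtain ⟨b1, b2⟩ := hx2
  have h2n : (0:ℝ) < 2^n := by positivity
  have h2m : (0:ℝ) < 2^m := by positivity
  have hpow : (2:ℝ)^n = 2^m * 2^(n-m) := by
    rw [← pow_add]; congr 1; omega
  have he : (0:ℝ) < 2^(n-m) := by positivity
  have h1 : j * 2^(n-m) ≤ k := by
    have h : (j:ℝ)/2^m < ((k:ℝ)+1)/2^n := lt_of_le_of_lt b1 a2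
    rw [div_lt_div_iff₀ h2m h2n, hpow] at h
    have h' : (j:ℝ) * 2^(n-m) < (k:ℝ)+1 := by nlinarith
    have h'' : ((j * 2^(n-m) : ℕ) : ℝ) < ((k+1 : ℕ) : ℝ) := by push_cast; linarith
    have := Nat.cast_lt.mp h''
    omega
  have h2 : k + 1 ≤ (j+1) * 2^(n-m) := by
    have h : (k:ℝ)/2^n < ((j:ℝ)+1)/2^m := lt_of_le_of_lt a1 b2
    rw [div_lt_div_iff₀ h2n h2m, hpow] at h
    have h' : (k:ℝ) < ((j:ℝ)+1) * 2^(n-m) := by nlinarith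
    have h'' : ((k : ℕ) : ℝ) < (((j+1) * 2^(n-m) : ℕ) : ℝ) := by push_cast; linarith
    have := Nat.cast_lt.mp h''
    omega
  intro y hy
  obtain ⟨c1, c2⟩ := hy
  constructor
  · have : (j:ℝ)/2^m ≤ (k:ℝ)/2^n := by
      rw [div_le_div_iff₀ h2m h2n, hpow]
      have : ((j * 2^(n-m) : ℕ) : ℝ) ≤ (k:ℝ) := by exact_mod_cast h1
      push_cast at this
      nlinarith
    linarith
  · have : ((k:ℝ)+1)/2^n ≤ ((j:ℝ)+1)/2^m := by
      rw [div_le_div_iff₀ h2n h2m, hpow]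
      have : ((k+1 : ℕ) : ℝ) ≤ (((j+1) * 2^(n-m) : ℕ) : ℝ) := by exact_mod_cast h2
      push_cast at this
      nlinarith
    linarith

lemma dyadicI_eq_k {n k j : ℕ} {x : ℝ} (h1 : x ∈ dyadicI n k) (h2 : x ∈ dyadicI n j) : k = j := by
  obtain ⟨a1, a2⟩ := h1
  obtain ⟨b1, b2⟩ := h2
  have h2n : (0:ℝ) < 2^n := by positivity
  have hkj : (k:ℝ) < (j:ℝ) + 1 := by
    have := lt_of_le_of_lt a1 b2
    rw [div_lt_div_iff₀ h2n h2n] at this; nlinarith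
  have hjk : (j:ℝ) < (k:ℝ) + 1 := by
    have := lt_of_le_of_lt b1 a2
    rw [div_lt_div_iff₀ h2n h2n] at this; nlinarith
  have : k < j + 1 := by exact_mod_cast hkj
  have : j < k + 1 := by exact_mod_cast hjk
  omega

lemma dyadicI_ssubset {n m k j : ℕ} (hmn : m < n) {x : ℝ}
    (hx1 : x ∈ dyadicI n k) (hx2 : x ∈ dyadicI m j) :
    dyadicI n k ⊂ dyadicI m j := by
  refine ⟨dyadicI_subset (le_of_lt hmn) hx1 hx2, fun hsub => ?_⟩
  have h2n : (0:ℝ) < 2^n := by positivity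
  have h2m : (0:ℝ) < 2^m := by positivity
  have hne : (k:ℝ)/2^n < ((k:ℝ)+1)/2^n := by
    rw [div_lt_div_iff₀ h2n h2n]; nlinarith
  have hnej : (j:ℝ)/2^m < ((j:ℝ)+1)/2^m := by
    rw [div_lt_div_iff₀ h2m h2m]; nlinarith
  rw [dyadicI, dyadicI, Set.Ico_subset_Ico_iff hnej] at hsub
  obtain ⟨e1, e2⟩ := hsub
  have hlen : ((j:ℝ)+1)/2^m - (j:ℝ)/2^m ≤ ((k:ℝ)+1)/2^n - (k:ℝ)/2^n := by linarith
  have hl1 : ((j:ℝ)+1)/2^m - (j:ℝ)/2^m = 1/2^m := by field_simp; ring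
  have hl2 : ((k:ℝ)+1)/2^n - (k:ℝ)/2^n = 1/2^n := by field_simp; ring
  rw [hl1, hl2] at hlen
  have : (2:ℝ)^n ≤ 2^m := by
    rw [div_le_div_iff₀ h2m h2n] at hlen; linarith
  have : (2:ℝ)^m < 2^n := by
    exact pow_lt_pow_right₀ (by norm_num) hmn
  linarith

lemma chain_sum (w : ℝ → ℝ) (δ : ℝ) (hδ0 : 0 < δ) (hδ1 : δ < 1)
    (hpos : ∀ I, IsDyadic I → 0 < wInt w I)
    (hrd : ∀ I J, IsDyadic I → IsDyadic J →
      dyadicI I.1 I.2 ⊂ dyadicI J.1 J.2 → wInt w I ≤ δ * wInt w J)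
    (t : ℝ) (ht : 0 < t) (x : ℝ) :
    ∀ S : Finset (ℕ × ℕ), (∀ J ∈ S, IsDyadic J) → (∀ J ∈ S, x ∈ dyadicI J.1 J.2) →
    ∀ I₀ : ℕ × ℕ, IsDyadic I₀ →
    (∀ J ∈ S, dyadicI I₀.1 I₀.2 ⊂ dyadicI J.1 J.2) →
    ∑ J ∈ S, (wInt w J) ^ (-t) ≤ δ ^ t * (wInt w I₀) ^ (-t) / (1 - δ ^ t) := by
  have hδt0 : (0:ℝ) < δ ^ t := Real.rpow_pos_of_pos hδ0 t
  have hδt1 : δ ^ t < 1 := Real.rpow_lt_one (le_of_lt hδ0) hδ1 ht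
  intro S
  induction S using Finset.strongInduction with
  | _ S ih =>
    intro hdy hmem I₀ hI₀ hstrict
    rcases S.eq_empty_or_nonempty with rfl | hne
    · simp only [Finset.sum_empty]
      have h1 : 0 < δ ^ t * (wInt w I₀) ^ (-t) :=
        mul_pos hδt0 (Real.rpow_pos_of_pos (hpos I₀ hI₀) _)
      exact le_of_lt (div_pos h1 (by linarith))
    obtain ⟨I₁, hI₁S, hI₁max⟩ := S.exists_max_image (fun J => J.1) hne
    have hI₁dy := hdy I₁ hI₁S
    have hI₁pos := hpos I₁ hI₁dy
    have hI₀pos := hpos I₀ hI₀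
    -- v_{I₁}^{-t} ≤ δ^t v_{I₀}^{-t}
    have hv01 : wInt w I₀ ≤ δ * wInt w I₁ := hrd I₀ I₁ hI₀ hI₁dy (hstrict I₁ hI₁S)
    have key : ∀ A B : ℝ, 0 < A → 0 < B → A ≤ δ * B → B ^ (-t) ≤ δ ^ t * A ^ (-t) := by
      intro A B hA hB hAB
      rw [Real.rpow_neg (le_of_lt hA), Real.rpow_neg (le_of_lt hB)]
      rw [← div_eq_mul_inv, le_div_iff₀ (Real.rpow_pos_of_pos hA t),
        inv_mul_le_iff₀ (Real.rpow_pos_of_pos hB t)]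
      calc A ^ t ≤ (δ * B) ^ t := Real.rpow_le_rpow (le_of_lt hA) hAB (le_of_lt ht)
        _ = δ ^ t * B ^ t := Real.mul_rpow (le_of_lt hδ0) (le_of_lt hB)
        _ = B ^ t * δ ^ t := mul_comm _ _
    have hkey1 : (wInt w I₁) ^ (-t) ≤ δ ^ t * (wInt w I₀) ^ (-t) :=
      key _ _ hI₀pos hI₁pos hv01
    -- elements of erase strictly contain I₁
    have herase : ∀ J ∈ S.erase I₁, dyadicI I₁.1 I₁.2 ⊂ dyadicI J.1 J.2 := by
      intro J hJ
      have hJne := Finset.ne_of_mem_erase hJ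
      have hJS := Finset.mem_of_mem_erase hJ
      have hle : J.1 ≤ I₁.1 := hI₁max J hJS
      rcases lt_or_eq_of_le hle with hlt | heq
      · exact dyadicI_ssubset hlt (hmem I₁ hI₁S) (hmem J hJS)
      · exfalso
        apply hJne
        have := dyadicI_eq_k (n := J.1) (hmem J hJS) (heq ▸ hmem I₁ hI₁S)
        exact Prod.ext heq this
    have hsub : ∑ J ∈ S.erase I₁, (wInt w J) ^ (-t)
        ≤ δ ^ t * (wInt w I₁) ^ (-t) / (1 - δ ^ t) := by
      refine ih (S.erase I₁) (Finset.erase_ssubset hI₁S)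
        (fun J hJ => hdy J (Finset.mem_of_mem_erase hJ))
        (fun J hJ => hmem J (Finset.mem_of_mem_erase hJ)) I₁ hI₁dy herase
    have hsum : ∑ J ∈ S, (wInt w J) ^ (-t)
        = (wInt w I₁) ^ (-t) + ∑ J ∈ S.erase I₁, (wInt w J) ^ (-t) :=
      (Finset.add_sum_erase S _ hI₁S).symm
    rw [hsum]
    have h1 : (wInt w I₁) ^ (-t) + δ ^ t * (wInt w I₁) ^ (-t) / (1 - δ ^ t)
        = (wInt w I₁) ^ (-t) / (1 - δ ^ t) := by
      have hne1 : (1:ℝ) - δ ^ t ≠ 0 := by linarith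
      field_simp
      ring
    have hv1t : (0:ℝ) < (wInt w I₁) ^ (-t) := Real.rpow_pos_of_pos hI₁pos _
    calc (wInt w I₁) ^ (-t) + ∑ J ∈ S.erase I₁, (wInt w J) ^ (-t)
        ≤ (wInt w I₁) ^ (-t) + δ ^ t * (wInt w I₁) ^ (-t) / (1 - δ ^ t) := by linarith
      _ = (wInt w I₁) ^ (-t) / (1 - δ ^ t) := h1
      _ ≤ δ ^ t * (wInt w I₀) ^ (-t) / (1 - δ ^ t) := by
          gcongr

lemma exists_min {x : ℝ} {S : Finset (ℕ × ℕ)} (hne : S.Nonempty)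
    (hmem : ∀ J ∈ S, x ∈ dyadicI J.1 J.2) :
    ∃ I₀ ∈ S, ∀ J ∈ S.erase I₀, dyadicI I₀.1 I₀.2 ⊂ dyadicI J.1 J.2 := by
  obtain ⟨I₀, hI₀S, hmax⟩ := S.exists_max_image (fun J => J.1) hne
  refine ⟨I₀, hI₀S, fun J hJ => ?_⟩
  have hJne := Finset.ne_of_mem_erase hJ
  have hJS := Finset.mem_of_mem_erase hJ
  rcases lt_or_eq_of_le (hmax J hJS) with hlt | heq
  · exact dyadicI_ssubset hlt (hmem I₀ hI₀S) (hmem J hJS)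
  · exact absurd (Prod.ext heq (dyadicI_eq_k (hmem J hJS) (heq ▸ hmem I₀ hI₀S))) hJne

lemma sum_bounds (w : ℝ → ℝ) (δ : ℝ) (hδ0 : 0 < δ) (hδ1 : δ < 1)
    (hpos : ∀ I, IsDyadic I → 0 < wInt w I)
    (hrd : ∀ I J, IsDyadic I → IsDyadic J →
      dyadicI I.1 I.2 ⊂ dyadicI J.1 J.2 → wInt w I ≤ δ * wInt w J)
    (t : ℝ) (ht : 0 < t) (x : ℝ) (S : Finset (ℕ × ℕ))
    (hdy : ∀ J ∈ S, IsDyadic J) (hmem : ∀ J ∈ S, x ∈ dyadicI J.1 J.2)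
    (I₀ : ℕ × ℕ) (hI₀S : I₀ ∈ S)
    (hmin : ∀ J ∈ S.erase I₀, dyadicI I₀.1 I₀.2 ⊂ dyadicI J.1 J.2) :
    (wInt w I₀) ^ (-t) ≤ ∑ J ∈ S, (wInt w J) ^ (-t) ∧
    ∑ J ∈ S, (wInt w J) ^ (-t) ≤ (wInt w I₀) ^ (-t) / (1 - δ ^ t) := by
  have hδt0 : (0:ℝ) < δ ^ t := Real.rpow_pos_of_pos hδ0 t
  have hδt1 : δ ^ t < 1 := Real.rpow_lt_one (le_of_lt hδ0) hδ1 ht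
  have hI₀dy := hdy I₀ hI₀S
  have hv₀ := hpos I₀ hI₀dy
  have hterm : ∀ J ∈ S, (0:ℝ) ≤ (wInt w J) ^ (-t) :=
    fun J hJ => le_of_lt (Real.rpow_pos_of_pos (hpos J (hdy J hJ)) _)
  constructor
  · exact Finset.single_le_sum hterm hI₀S
  · have hch := chain_sum w δ hδ0 hδ1 hpos hrd t ht x (S.erase I₀)
      (fun J hJ => hdy J (Finset.mem_of_mem_erase hJ))
      (fun J hJ => hmem J (Finset.mem_of_mem_erase hJ)) I₀ hI₀dy hmin
    have hsum : ∑ J ∈ S, (wInt w J) ^ (-t)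
        = (wInt w I₀) ^ (-t) + ∑ J ∈ S.erase I₀, (wInt w J) ^ (-t) :=
      (Finset.add_sum_erase S _ hI₀S).symm
    have heq : (wInt w I₀) ^ (-t) + δ ^ t * (wInt w I₀) ^ (-t) / (1 - δ ^ t)
        = (wInt w I₀) ^ (-t) / (1 - δ ^ t) := by
      have hne1 : (1:ℝ) - δ ^ t ≠ 0 := by linarith
      field_simp
      ring
    rw [hsum]
    linarith

lemma pointwise_key (w : ℝ → ℝ) (δ p : ℝ) (hδ0 : 0 < δ) (hδ1 : δ < 1) (hp : 1 < p)
    (hpos : ∀ I, IsDyadic I → 0 < wInt w I)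
    (hrd : ∀ I J, IsDyadic I → IsDyadic J →
      dyadicI I.1 I.2 ⊂ dyadicI J.1 J.2 → wInt w I ≤ δ * wInt w J)
    (x : ℝ) (S : Finset (ℕ × ℕ))
    (hdy : ∀ J ∈ S, IsDyadic J) (hmem : ∀ J ∈ S, x ∈ dyadicI J.1 J.2) (hne : S.Nonempty) :
    (∑ J ∈ S, (wInt w J) ^ (-(2/p))) ^ (p/2)
        ≤ ((1 - δ ^ (2/p))⁻¹) ^ (p/2) * ∑ J ∈ S, (wInt w J) ^ (-(1:ℝ)) ∧
    ∑ J ∈ S, (wInt w J) ^ (-(1:ℝ))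
        ≤ (1 - δ)⁻¹ * (∑ J ∈ S, (wInt w J) ^ (-(2/p))) ^ (p/2) := by
  have hp0 : (0:ℝ) < p := by linarith
  have ht₂ : (0:ℝ) < 2/p := by positivity
  have hδt0 : (0:ℝ) < δ ^ (2/p) := Real.rpow_pos_of_pos hδ0 _
  have hδt1 : δ ^ (2/p) < 1 := Real.rpow_lt_one (le_of_lt hδ0) hδ1 ht₂
  obtain ⟨I₀, hI₀S, hmin⟩ := exists_min hne hmem
  have hc : (0:ℝ) < (1 - δ ^ (2/p))⁻¹ := inv_pos.mpr (by linarith [Real.rpow_lt_one (le_of_lt hδ0) hδ1 ht₂])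
  have hv₀ := hpos I₀ (hdy I₀ hI₀S)
  obtain ⟨hA1, hA2⟩ := sum_bounds w δ hδ0 hδ1 hpos hrd (2/p) ht₂ x S hdy hmem I₀ hI₀S hmin
  obtain ⟨hB1, hB2⟩ := sum_bounds w δ hδ0 hδ1 hpos hrd 1 one_pos x S hdy hmem I₀ hI₀S hmin
  have hδ1' : δ ^ (1:ℝ) = δ := Real.rpow_one δ
  rw [hδ1'] at hB2
  -- key rpow identity
  have hmulexp : (-(2/p)) * (p/2) = -1 := by field_simp
  have hid : ((wInt w I₀) ^ (-(2/p))) ^ (p/2) = (wInt w I₀) ^ (-(1:ℝ)) := by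
    rw [← Real.rpow_mul (le_of_lt hv₀), hmulexp]
  have hApos : (0:ℝ) ≤ ∑ J ∈ S, (wInt w J) ^ (-(2/p)) :=
    Finset.sum_nonneg fun J hJ => le_of_lt (Real.rpow_pos_of_pos (hpos J (hdy J hJ)) _)
  constructor
  · have h1 : (∑ J ∈ S, (wInt w J) ^ (-(2/p))) ^ (p/2)
        ≤ ((wInt w I₀) ^ (-(2/p)) * (1 - δ ^ (2/p))⁻¹) ^ (p/2) := by
      apply Real.rpow_le_rpow hApos _ (by positivity)
      rw [← div_eq_mul_inv]
      exact hA2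
    have h2 : ((wInt w I₀) ^ (-(2/p)) * (1 - δ ^ (2/p))⁻¹) ^ (p/2)
        = (wInt w I₀) ^ (-(1:ℝ)) * ((1 - δ ^ (2/p))⁻¹) ^ (p/2) := by
      rw [Real.mul_rpow (le_of_lt (Real.rpow_pos_of_pos hv₀ _)) hc.le, hid]
    calc (∑ J ∈ S, (wInt w J) ^ (-(2/p))) ^ (p/2)
        ≤ (wInt w I₀) ^ (-(1:ℝ)) * ((1 - δ ^ (2/p))⁻¹) ^ (p/2) := by rw [← h2]; exact h1
      _ ≤ ((1 - δ ^ (2/p))⁻¹) ^ (p/2) * ∑ J ∈ S, (wInt w J) ^ (-(1:ℝ)) := by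
          rw [mul_comm]
          have hC : (0:ℝ) < ((1 - δ ^ (2/p))⁻¹) ^ (p/2) := Real.rpow_pos_of_pos hc _
          exact mul_le_mul_of_nonneg_left hB1 (le_of_lt hC)
  · have h3 : (wInt w I₀) ^ (-(1:ℝ)) ≤ (∑ J ∈ S, (wInt w J) ^ (-(2/p))) ^ (p/2) := by
      rw [← hid]
      exact Real.rpow_le_rpow (le_of_lt (Real.rpow_pos_of_pos hv₀ _)) hA1 (by positivity)
    calc ∑ J ∈ S, (wInt w J) ^ (-(1:ℝ))
        ≤ (wInt w I₀) ^ (-(1:ℝ)) / (1 - δ) := hB2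
      _ = (1 - δ)⁻¹ * (wInt w I₀) ^ (-(1:ℝ)) := by rw [div_eq_mul_inv, mul_comm]
      _ ≤ (1 - δ)⁻¹ * (∑ J ∈ S, (wInt w J) ^ (-(2/p))) ^ (p/2) := by
          exact mul_le_mul_of_nonneg_left h3 (inv_nonneg.mpr (by linarith))

lemma measurableSet_dyadicI (n k : ℕ) : MeasurableSet (dyadicI n k) := measurableSet_Ico

theorem stmt3 (w : ℝ → ℝ) (δ p : ℝ) (hδ0 : 0 < δ) (hδ1 : δ < 1) (hp : 1 < p)
    (hw : ∀ x, 0 ≤ w x) (hpos : ∀ I, IsDyadic I → 0 < wInt w I)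
    (hrd : ∀ I J, IsDyadic I → IsDyadic J →
      dyadicI I.1 I.2 ⊂ dyadicI J.1 J.2 → wInt w I ≤ δ * wInt w J) :
    ∃ c > (0 : ℝ), ∃ c' > (0 : ℝ), ∀ Λ : Finset (ℕ × ℕ), (∀ I ∈ Λ, IsDyadic I) →
      c * (Λ.card : ℝ) ^ (1 / p) ≤ XnormOne w p Λ ∧
      XnormOne w p Λ ≤ c' * (Λ.card : ℝ) ^ (1 / p) := by
  classical
  have hp0 : (0:ℝ) < p := by linarith
  have ht₂ : (0:ℝ) < 2/p := by positivity
  have hδt1 : δ ^ (2/p) < 1 := Real.rpow_lt_one (le_of_lt hδ0) hδ1 ht₂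
  have hcinv : (0:ℝ) < (1 - δ ^ (2/p))⁻¹ := inv_pos.mpr (by linarith)
  set C₁ : ℝ := ((1 - δ ^ (2/p))⁻¹) ^ (p/2) with hC₁def
  have hC₁ : 0 < C₁ := Real.rpow_pos_of_pos hcinv _
  -- w is integrable on [0,1)
  have hd00 : dyadicI 0 0 = Set.Ico (0:ℝ) 1 := by
    simp [dyadicI]
  have hwint : IntegrableOn w (Set.Ico (0:ℝ) 1) volume := by
    by_contra hni
    have h := hpos (0,0) (by simp [IsDyadic])
    rw [wInt] at h
    simp only [hd00] at h
    rw [MeasureTheory.integral_undef hni] at h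
    exact lt_irrefl 0 h
  refine ⟨(1 - δ) ^ (1/p), Real.rpow_pos_of_pos (by linarith) _,
    C₁ ^ (1/p), Real.rpow_pos_of_pos hC₁ _, fun Λ hΛ => ?_⟩
  set f : ℝ → ℝ := fun x =>
    ∑ I ∈ Λ, Set.indicator (dyadicI I.1 I.2) (fun _ => (wInt w I) ^ (-(2 / p))) x with hfdef
  set F : ℝ → ℝ := fun x => (f x) ^ (p/2) * w x with hFdef
  set g : ℝ → ℝ := fun x =>
    ∑ I ∈ Λ, Set.indicator (dyadicI I.1 I.2) (fun y => (wInt w I) ^ (-(1:ℝ)) * w y) x with hgdef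
  -- pointwise comparisons
  have hptwise : ∀ x : ℝ, 0 ≤ F x ∧ 0 ≤ g x ∧ F x ≤ C₁ * g x ∧ g x ≤ (1 - δ)⁻¹ * F x := by
    intro x
    set S : Finset (ℕ × ℕ) := Λ.filter (fun I => x ∈ dyadicI I.1 I.2) with hSdef
    have hSdy : ∀ J ∈ S, IsDyadic J := fun J hJ => hΛ J (Finset.mem_filter.1 hJ).1
    have hSmem : ∀ J ∈ S, x ∈ dyadicI J.1 J.2 := fun J hJ => (Finset.mem_filter.1 hJ).2
    have hfx : f x = ∑ J ∈ S, (wInt w J) ^ (-(2/p)) := by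
      rw [hfdef, hSdef, Finset.sum_filter]
      simp [Set.indicator_apply]
    have hgx : g x = (∑ J ∈ S, (wInt w J) ^ (-(1:ℝ))) * w x := by
      rw [hgdef, hSdef, Finset.sum_filter, Finset.sum_mul]
      apply Finset.sum_congr rfl
      intro I _
      by_cases hxI : x ∈ dyadicI I.1 I.2 <;> simp [Set.indicator_apply, hxI]
    rcases S.eq_empty_or_nonempty with hSe | hne
    · have hf0 : f x = 0 := by rw [hfx, hSe, Finset.sum_empty]
      have hg0 : g x = 0 := by rw [hgx, hSe, Finset.sum_empty, zero_mul]
      have hF0 : F x = 0 := by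
        rw [hFdef]
        simp only [hf0]
        rw [Real.zero_rpow (by positivity), zero_mul]
      refine ⟨le_of_eq hF0.symm, le_of_eq hg0.symm, ?_, ?_⟩
      · rw [hF0, hg0, mul_zero]
      · rw [hF0, hg0, mul_zero]
    · obtain ⟨hkey1, hkey2⟩ := pointwise_key w δ p hδ0 hδ1 hp hpos hrd x S hSdy hSmem hne
      have hfx0 : 0 ≤ f x := by
        rw [hfx]
        exact Finset.sum_nonneg fun J hJ =>
          le_of_lt (Real.rpow_pos_of_pos (hpos J (hSdy J hJ)) _)
      have hF0 : 0 ≤ F x := mul_nonneg (Real.rpow_nonneg hfx0 _) (hw x)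
      have hgx0 : 0 ≤ g x := by
        rw [hgx]
        exact mul_nonneg (Finset.sum_nonneg fun J hJ =>
          le_of_lt (Real.rpow_pos_of_pos (hpos J (hSdy J hJ)) _)) (hw x)
      refine ⟨hF0, hgx0, ?_, ?_⟩
      · rw [hFdef]
        simp only
        rw [hfx, hgx]
        calc (∑ J ∈ S, (wInt w J) ^ (-(2/p))) ^ (p/2) * w x
            ≤ (C₁ * ∑ J ∈ S, (wInt w J) ^ (-(1:ℝ))) * w x :=
              mul_le_mul_of_nonneg_right hkey1 (hw x)
          _ = C₁ * ((∑ J ∈ S, (wInt w J) ^ (-(1:ℝ))) * w x) := by ring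
      · rw [hFdef]
        simp only
        rw [hfx, hgx]
        calc (∑ J ∈ S, (wInt w J) ^ (-(1:ℝ))) * w x
            ≤ ((1 - δ)⁻¹ * (∑ J ∈ S, (wInt w J) ^ (-(2/p))) ^ (p/2)) * w x :=
              mul_le_mul_of_nonneg_right hkey2 (hw x)
          _ = (1 - δ)⁻¹ * ((∑ J ∈ S, (wInt w J) ^ (-(2/p))) ^ (p/2) * w x) := by ring
  -- integrability of g and its integral
  have hgterm : ∀ I ∈ Λ, Integrable
      (Set.indicator (dyadicI I.1 I.2) (fun y => (wInt w I) ^ (-(1:ℝ)) * w y))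
      (volume.restrict (Set.Ico (0:ℝ) 1)) := by
    intro I hI
    exact (hwint.const_mul _).indicator (measurableSet_dyadicI I.1 I.2)
  have hgint : Integrable g (volume.restrict (Set.Ico (0:ℝ) 1)) := by
    rw [hgdef]
    exact integrable_finset_sum _ hgterm
  have hgeq : ∫ x in Set.Ico (0:ℝ) 1, g x = (Λ.card : ℝ) := by
    rw [hgdef]
    rw [MeasureTheory.integral_finset_sum _ hgterm]
    have : ∀ I ∈ Λ, (∫ x in Set.Ico (0:ℝ) 1,
        Set.indicator (dyadicI I.1 I.2) (fun y => (wInt w I) ^ (-(1:ℝ)) * w y) x) = 1 := by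
      intro I hI
      rw [MeasureTheory.integral_indicator (measurableSet_dyadicI I.1 I.2)]
      rw [Measure.restrict_restrict (measurableSet_dyadicI I.1 I.2)]
      rw [Set.inter_eq_left.mpr (dyadicI_subset_unit (hΛ I hI))]
      rw [MeasureTheory.integral_const_mul]
      rw [Real.rpow_neg_one]
      exact inv_mul_cancel₀ (ne_of_gt (hpos I (hΛ I hI)))
    rw [Finset.sum_congr rfl this, Finset.sum_const, nsmul_eq_mul, mul_one]
  -- integrability of F
  have hfmeas : Measurable f := by
    rw [hfdef]
    exact Finset.measurable_sum _ fun I _ =>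
      Measurable.indicator measurable_const (measurableSet_dyadicI I.1 I.2)
  have hFmeas : AEStronglyMeasurable F (volume.restrict (Set.Ico (0:ℝ) 1)) := by
    rw [hFdef]
    exact (((Real.continuous_rpow_const (by positivity : (0:ℝ) ≤ p/2)).measurable.comp hfmeas).aestronglyMeasurable).mul hwint.1
  have hFint : Integrable F (volume.restrict (Set.Ico (0:ℝ) 1)) := by
    refine (hgint.const_mul C₁).mono hFmeas (ae_of_all _ fun x => ?_)
    obtain ⟨h1, h2, h3, _⟩ := hptwise x
    rw [Real.norm_of_nonneg h1, Real.norm_of_nonneg (mul_nonneg (le_of_lt hC₁) h2)]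
    exact h3
  -- integral comparisons
  have hup : ∫ x in Set.Ico (0:ℝ) 1, F x ≤ C₁ * (Λ.card : ℝ) := by
    calc ∫ x in Set.Ico (0:ℝ) 1, F x
        ≤ ∫ x in Set.Ico (0:ℝ) 1, C₁ * g x :=
          MeasureTheory.integral_mono hFint (hgint.const_mul C₁) (fun x => (hptwise x).2.2.1)
      _ = C₁ * ∫ x in Set.Ico (0:ℝ) 1, g x := MeasureTheory.integral_const_mul _ _
      _ = C₁ * (Λ.card : ℝ) := by rw [hgeq]
  have hlo : (1 - δ) * (Λ.card : ℝ) ≤ ∫ x in Set.Ico (0:ℝ) 1, F x := by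
    have h1 : (Λ.card : ℝ) ≤ (1 - δ)⁻¹ * ∫ x in Set.Ico (0:ℝ) 1, F x := by
      calc (Λ.card : ℝ) = ∫ x in Set.Ico (0:ℝ) 1, g x := hgeq.symm
        _ ≤ ∫ x in Set.Ico (0:ℝ) 1, (1 - δ)⁻¹ * F x :=
            MeasureTheory.integral_mono hgint (hFint.const_mul _) (fun x => (hptwise x).2.2.2)
        _ = (1 - δ)⁻¹ * ∫ x in Set.Ico (0:ℝ) 1, F x := MeasureTheory.integral_const_mul _ _
    have hδ' : (0:ℝ) < 1 - δ := by linarith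
    calc (1 - δ) * (Λ.card : ℝ)
        ≤ (1 - δ) * ((1 - δ)⁻¹ * ∫ x in Set.Ico (0:ℝ) 1, F x) :=
          mul_le_mul_of_nonneg_left h1 (le_of_lt hδ')
      _ = ∫ x in Set.Ico (0:ℝ) 1, F x := by
          rw [← mul_assoc, mul_inv_cancel₀ (ne_of_gt hδ'), one_mul]
  have hXeq : XnormOne w p Λ = (∫ x in Set.Ico (0:ℝ) 1, F x) ^ (1/p) := rfl
  have hcard0 : (0:ℝ) ≤ (Λ.card : ℝ) := Nat.cast_nonneg _
  constructor
  · rw [hXeq, ← Real.mul_rpow (by linarith) hcard0]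
    exact Real.rpow_le_rpow (mul_nonneg (by linarith) hcard0) hlo (by positivity)
  · rw [hXeq, ← Real.mul_rpow (le_of_lt hC₁) hcard0]
    have hF0int : 0 ≤ ∫ x in Set.Ico (0:ℝ) 1, F x :=
      MeasureTheory.integral_nonneg fun x => (hptwise x).1
    exact Real.rpow_le_rpow hF0int hup (by positivity)
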